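/- Let p ∈ C be an elliptic m-fold point on a reduced curve over an algebraically closed field, with normalization π: C̃ → C at p and preimages p₁,…,p_m. Then the dualizing sheaf ω_C is invertible in a neighborhood of p (the elliptic m-fold point is Gorenstein), and π*ω_C ≅ ω_{C̃}(2p₁ + ⋯ + 2p_m). -/

import Mathlib

set_option synthInstance.maxHeartbeats 1000000
set_option maxHeartbeats 1000000

/-- The complete local ring of the elliptic `m`-fold point inside its
normalization `k[[t₁]] × ⋯ × k[[t_m]]`. -/
noncomputable def ellipticSubalgebra (k : Type) [Field k] (m : ℕ) :
    Subalgebra k (Fin m → PowerSeries k) :=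
  Algebra.adjoin k
    ({g : Fin m → PowerSeries k | ∃ i : Fin (m - 1),
        g = fun j : Fin m =>
          if (j : ℕ) = (i : ℕ) ∨ (j : ℕ) = m - 1 then PowerSeries.X else 0}
      ∪ {g : Fin m → PowerSeries k |
          ∀ j : Fin m, g j ∈ (Ideal.span {PowerSeries.X}) ^ 2})

/-- The local dualizing module at an elliptic `m`-fold point: tuples of
rational (Laurent) differentials `gᵢ dtᵢ` on the branches of the
normalization satisfying the residue condition
`∑ᵢ Res_{p_i} ((π^*r)·g) = 0` for all `r` in the local ring. -/
def dualizingSet (k : Type) [Field k] (m : ℕ) : Set (Fin m → LaurentSeries k) :=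
  {g | ∀ r ∈ ellipticSubalgebra k m,
    ∑ i : Fin m, ((HahnSeries.ofPowerSeries ℤ k (r i)) * g i).coeff (-1) = 0}

namespace Aux12

variable (k : Type) [Field k] (n : ℕ)

noncomputable def xgen (i : Fin n) : Fin (n+1) → PowerSeries k :=
  fun j => if (j : ℕ) = (i : ℕ) ∨ (j : ℕ) = n then PowerSeries.X else 0

lemma ES_eq : ellipticSubalgebra k (n+1) = Algebra.adjoin k
    ({g : Fin (n+1) → PowerSeries k | ∃ i : Fin n, g = xgen k n i}
      ∪ {g : Fin (n+1) → PowerSeries k |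
          ∀ j : Fin (n+1), g j ∈ (Ideal.span {PowerSeries.X}) ^ 2}) := rfl

lemma xgen_mem (i : Fin n) : xgen k n i ∈ ellipticSubalgebra k (n+1) := by
  rw [ES_eq]
  exact Algebra.subset_adjoin (Or.inl ⟨i, rfl⟩)

lemma sq_mem (f : Fin (n+1) → PowerSeries k)
    (h : ∀ j, f j ∈ (Ideal.span {PowerSeries.X}) ^ 2) :
    f ∈ ellipticSubalgebra k (n+1) := by
  rw [ES_eq]
  exact Algebra.subset_adjoin (Or.inr h)

lemma mem_sq_iff (p : PowerSeries k) :
    p ∈ (Ideal.span {PowerSeries.X}) ^ 2 ↔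
      PowerSeries.coeff (R := k) 0 p = 0 ∧ PowerSeries.coeff (R := k) 1 p = 0 := by
  rw [Ideal.span_singleton_pow, Ideal.mem_span_singleton, PowerSeries.X_pow_dvd_iff]
  constructor
  · intro h; exact ⟨h 0 (by norm_num), h 1 (by norm_num)⟩
  · rintro ⟨h0, h1⟩ m hm
    interval_cases m
    · exact h0
    · exact h1

def sgn (j : Fin (n+1)) : k := if j = Fin.last n then -1 else 1

lemma sgn_ne_zero (j : Fin (n+1)) : sgn k n j ≠ 0 := by
  unfold sgn; split <;> simp

lemma sgn_sq (j : Fin (n+1)) : sgn k n j * sgn k n j = 1 := by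
  unfold sgn; split <;> ring

lemma sgn_castSucc (i : Fin n) : sgn k n (Fin.castSucc i) = 1 := by
  unfold sgn
  rw [if_neg]
  exact (Fin.castSucc_lt_last i).ne

lemma sgn_last : sgn k n (Fin.last n) = -1 := if_pos rfl

lemma sum_if_two {M : Type} [AddCommMonoid M] (f : Fin (n+1) → M) (i : Fin n) :
    (∑ j : Fin (n+1), if (j : ℕ) = (i : ℕ) ∨ (j : ℕ) = n then f j else 0)
      = f (Fin.castSucc i) + f (Fin.last n) := by
  rw [Fin.sum_univ_castSucc]
  have hlast : ((Fin.last n : Fin (n+1)) : ℕ) = n := rfl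
  rw [if_pos (Or.inr hlast)]
  congr 1
  have : ∀ j : Fin n, (if ((Fin.castSucc j : Fin (n+1)) : ℕ) = (i : ℕ) ∨
      ((Fin.castSucc j : Fin (n+1)) : ℕ) = n then f (Fin.castSucc j) else 0)
      = if j = i then f (Fin.castSucc j) else 0 := by
    intro j
    congr 1
    simp only [Fin.coe_castSucc, eq_iff_iff]
    constructor
    · rintro (h | h)
      · exact Fin.ext h
      · exact absurd h j.isLt.ne
    · intro h; exact Or.inl (by rw [h])
  rw [Finset.sum_congr rfl (fun j _ => this j)]
  simp

lemma coeff_mul_zero (f g : PowerSeries k) :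
    PowerSeries.coeff (R := k) 0 (f * g) = PowerSeries.coeff (R := k) 0 f * PowerSeries.coeff (R := k) 0 g := by
  simp [PowerSeries.coeff_mul]

lemma coeff_mul_one' (f g : PowerSeries k) :
    PowerSeries.coeff (R := k) 1 (f * g) = PowerSeries.coeff (R := k) 0 f * PowerSeries.coeff (R := k) 1 g
      + PowerSeries.coeff (R := k) 1 f * PowerSeries.coeff (R := k) 0 g := by
  rw [PowerSeries.coeff_mul]
  rw [show (1 : ℕ) = 0 + 1 by rfl, Finset.Nat.antidiagonal_succ]
  simp [PowerSeries.coeff_zero_eq_constantCoeff, Prod.map]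

def Scond (f : Fin (n+1) → PowerSeries k) : Prop :=
  (∀ j, PowerSeries.coeff (R := k) 0 (f j) = PowerSeries.coeff (R := k) 0 (f (Fin.last n))) ∧
  (∑ j : Fin (n+1), sgn k n j * PowerSeries.coeff (R := k) 1 (f j)) = 0

noncomputable def SAlg : Subalgebra k (Fin (n+1) → PowerSeries k) where
  carrier := {f | Scond k n f}
  mul_mem' := by
    rintro f g ⟨hf0, hf1⟩ ⟨hg0, hg1⟩
    constructor
    · intro j
      simp only [Pi.mul_apply, coeff_mul_zero]
      rw [hf0 j, hg0 j]
    · simp only [Pi.mul_apply, coeff_mul_one']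
      have : ∀ j : Fin (n+1), sgn k n j *
          (PowerSeries.coeff (R := k) 0 (f j) * PowerSeries.coeff (R := k) 1 (g j)
            + PowerSeries.coeff (R := k) 1 (f j) * PowerSeries.coeff (R := k) 0 (g j))
          = PowerSeries.coeff (R := k) 0 (f (Fin.last n)) * (sgn k n j * PowerSeries.coeff (R := k) 1 (g j))
            + PowerSeries.coeff (R := k) 0 (g (Fin.last n)) * (sgn k n j * PowerSeries.coeff (R := k) 1 (f j)) := by
        intro j
        rw [hf0 j, hg0 j]; ring
      rw [Finset.sum_congr rfl (fun j _ => this j), Finset.sum_add_distrib,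
        ← Finset.mul_sum, ← Finset.mul_sum, hf1, hg1]
      ring
  add_mem' := by
    rintro f g ⟨hf0, hf1⟩ ⟨hg0, hg1⟩
    constructor
    · intro j
      simp only [Pi.add_apply, map_add]
      rw [hf0 j, hg0 j]
    · simp only [Pi.add_apply, map_add, mul_add]
      rw [Finset.sum_add_distrib, hf1, hg1, add_zero]
  algebraMap_mem' := by
    intro c
    constructor
    · intro j; rfl
    · have : ∀ j : Fin (n+1),
          sgn k n j * PowerSeries.coeff (R := k) 1 ((algebraMap k (Fin (n+1) → PowerSeries k) c) j) = 0 := by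
        intro j
        have : (algebraMap k (Fin (n+1) → PowerSeries k) c) j = PowerSeries.C (R := k) c := rfl
        rw [this, PowerSeries.coeff_C]
        simp
      rw [Finset.sum_congr rfl (fun j _ => this j)]
      simp

lemma R_le_S (f : Fin (n+1) → PowerSeries k) (hf : f ∈ ellipticSubalgebra k (n+1)) :
    Scond k n f := by
  rw [ES_eq] at hf
  have : Algebra.adjoin k
      ({g : Fin (n+1) → PowerSeries k | ∃ i : Fin n, g = xgen k n i}
        ∪ {g : Fin (n+1) → PowerSeries k |
            ∀ j : Fin (n+1), g j ∈ (Ideal.span {PowerSeries.X}) ^ 2}) ≤ SAlg k n := by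
    apply Algebra.adjoin_le
    rintro g (⟨i, rfl⟩ | hg)
    · constructor
      · intro j
        simp only [xgen]
        split <;> split <;> simp [PowerSeries.coeff_zero_X]
      · have : ∀ j : Fin (n+1), sgn k n j * PowerSeries.coeff (R := k) 1 (xgen k n i j)
            = (if (j : ℕ) = (i : ℕ) ∨ (j : ℕ) = n then sgn k n j else 0) := by
          intro j
          simp only [xgen]
          split <;> simp [PowerSeries.coeff_one_X]
        rw [Finset.sum_congr rfl (fun j _ => this j), sum_if_two,
          sgn_castSucc, sgn_last]
        ring
    · constructor
      · intro j
        rw [((mem_sq_iff k _).mp (hg j)).1, ((mem_sq_iff k _).mp (hg (Fin.last n))).1]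
      · have : ∀ j : Fin (n+1), sgn k n j * PowerSeries.coeff (R := k) 1 (g j) = 0 := by
          intro j
          rw [((mem_sq_iff k _).mp (hg j)).2, mul_zero]
        rw [Finset.sum_congr rfl (fun j _ => this j)]
        simp
  exact this hf

lemma S_le_R (f : Fin (n+1) → PowerSeries k) (hf : Scond k n f) :
    f ∈ ellipticSubalgebra k (n+1) := by
  obtain ⟨h0, h1⟩ := hf
  set α := PowerSeries.coeff (R := k) 0 (f (Fin.last n)) with hα
  set a : Fin n → k := fun i => PowerSeries.coeff (R := k) 1 (f (Fin.castSucc i)) with ha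
  set q : Fin (n+1) → PowerSeries k :=
    f - algebraMap k _ α - ∑ i : Fin n, a i • xgen k n i with hq
  have hfq : f = algebraMap k _ α + (∑ i : Fin n, a i • xgen k n i) + q := by
    rw [hq]; ring
  have hlast1 : PowerSeries.coeff (R := k) 1 (f (Fin.last n)) = ∑ i : Fin n, a i := by
    rw [Fin.sum_univ_castSucc] at h1
    have e1 : ∀ i : Fin n, sgn k n (Fin.castSucc i) *
        PowerSeries.coeff (R := k) 1 (f (Fin.castSucc i)) = a i := by
      intro i; rw [sgn_castSucc]; simp [ha]
    rw [Finset.sum_congr rfl (fun i _ => e1 i), sgn_last] at h1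
    linear_combination -h1
  have hqmem : ∀ j, q j ∈ (Ideal.span {(PowerSeries.X : PowerSeries k)}) ^ 2 := by
    intro j
    rw [mem_sq_iff]
    have hqj : q j = f j - PowerSeries.C (R := k) α - ∑ i : Fin n, a i • xgen k n i j := by
      simp [hq, Finset.sum_apply]
    have hsum0 : PowerSeries.coeff (R := k) 0 (∑ i : Fin n, a i • xgen k n i j) = 0 := by
      rw [map_sum]
      apply Finset.sum_eq_zero
      intro i _
      simp only [xgen, map_smul]
      split <;> simp [PowerSeries.coeff_zero_X]
    have hsum1 : PowerSeries.coeff (R := k) 1 (∑ i : Fin n, a i • xgen k n i j)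
        = ∑ i : Fin n, (if (j : ℕ) = (i : ℕ) ∨ (j : ℕ) = n then a i else 0) := by
      rw [map_sum]
      apply Finset.sum_congr rfl
      intro i _
      simp only [xgen, map_smul]
      split <;> simp [PowerSeries.coeff_one_X]
    constructor
    · rw [hqj]
      simp only [map_sub, hsum0, PowerSeries.coeff_zero_C]
      rw [h0 j]
      ring
    · rw [hqj]
      simp only [map_sub, hsum1, PowerSeries.coeff_C]
      norm_num
      by_cases hj : j = Fin.last n
      · subst hj
        have : ∀ i : Fin n, (if ((Fin.last n : Fin (n+1)) : ℕ) = (i : ℕ) ∨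
            ((Fin.last n : Fin (n+1)) : ℕ) = n then a i else 0) = a i := by
          intro i; exact if_pos (Or.inr (Fin.val_last n))
        rw [Finset.sum_congr rfl (fun i _ => this i), hlast1]
        ring
      · obtain ⟨j', rfl⟩ : ∃ j' : Fin n, j = Fin.castSucc j' := by
          have hlt : (j : ℕ) < n := by
            rcases Fin.lt_or_eq_of_le (Fin.le_last j) with h | h
            · exact Nat.lt_of_lt_of_le h (le_refl n)
            · exact absurd h hj
          exact ⟨⟨j, hlt⟩, by ext; rfl⟩
        have : ∀ i : Fin n, (if ((Fin.castSucc j' : Fin (n+1)) : ℕ) = (i : ℕ) ∨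
            ((Fin.castSucc j' : Fin (n+1)) : ℕ) = n then a i else 0)
            = if i = j' then a i else 0 := by
          intro i
          congr 1
          simp only [Fin.coe_castSucc, eq_iff_iff]
          constructor
          · rintro (h | h)
            · exact Fin.ext h.symm
            · exact absurd h j'.isLt.ne
          · intro h; exact Or.inl (by rw [h])
        rw [Finset.sum_congr rfl (fun i _ => this i)]
        simp [ha]
  rw [hfq]
  exact add_mem (add_mem (Subalgebra.algebraMap_mem _ α)
    (Subalgebra.sum_mem _ (fun i _ => Subalgebra.smul_mem _ (xgen_mem k n i) (a i))))
    (sq_mem k n q hqmem)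

lemma ofPS_coeff_neg (f : PowerSeries k) (m : ℤ) (hm : m < 0) :
    (HahnSeries.ofPowerSeries ℤ k f).coeff m = 0 := by
  rw [HahnSeries.ofPowerSeries_apply]
  apply HahnSeries.embDomain_notin_range
  rintro ⟨a, ha⟩
  have : (a : ℤ) = m := ha
  omega

lemma ofPS_coeff_nonneg (f : PowerSeries k) (m : ℤ) (hm : 0 ≤ m) :
    (HahnSeries.ofPowerSeries ℤ k f).coeff m = PowerSeries.coeff (R := k) m.toNat f := by
  have h : m = ((m.toNat : ℕ) : ℤ) := by omega
  rw [h, HahnSeries.ofPowerSeries_apply_coeff]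
  congr 1

lemma mul_single_coeff' (x : LaurentSeries k) (c : k) (b m : ℤ) :
    (x * HahnSeries.single b c).coeff m = x.coeff (m - b) * c := by
  have : m = (m - b) + b := by ring
  rw [this, HahnSeries.coeff_mul_single_add]
  ring_nf

lemma single_mul_coeff' (x : LaurentSeries k) (c : k) (b m : ℤ) :
    (HahnSeries.single b c * x).coeff m = c * x.coeff (m - b) := by
  have : m = (m - b) + b := by ring
  rw [this, HahnSeries.coeff_single_mul_add]
  ring_nf

noncomputable def gen0 : Fin (n+1) → LaurentSeries k :=
  fun j => HahnSeries.single (-2 : ℤ) (sgn k n j)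

def dualizingSet' (m : ℕ) : Set (Fin m → LaurentSeries k) :=
  {g | ∀ r ∈ ellipticSubalgebra k m,
    ∑ i : Fin m, ((HahnSeries.ofPowerSeries ℤ k (r i)) * g i).coeff (-1) = 0}

lemma gen0_mem : gen0 k n ∈ dualizingSet' k (n+1) := by
  intro r hr
  obtain ⟨h0, h1⟩ := R_le_S k n r hr
  have : ∀ i : Fin (n+1),
      ((HahnSeries.ofPowerSeries ℤ k (r i)) * gen0 k n i).coeff (-1)
        = sgn k n i * PowerSeries.coeff (R := k) 1 (r i) := by
    intro i
    rw [gen0, mul_single_coeff']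
    norm_num
    rw [ofPS_coeff_nonneg k (r i) 1 (by norm_num)]
    norm_num
    ring
  rw [Finset.sum_congr rfl (fun i _ => this i)]
  exact h1

lemma gen0_order (j : Fin (n+1)) : (gen0 k n j).order = -2 :=
  HahnSeries.order_single (sgn_ne_zero k n j)

lemma E1 (g : Fin (n+1) → LaurentSeries k) (hg : g ∈ dualizingSet' k (n+1))
    (j : Fin (n+1)) (m : ℤ) (hm : m ≤ -3) : (g j).coeff m = 0 := by
  set kk : ℕ := (-1 - m).toNat with hkk
  have hkk2 : (2 : ℕ) ≤ kk := by omega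
  set r : Fin (n+1) → PowerSeries k :=
    fun j' => if j' = j then PowerSeries.X ^ kk else 0 with hr
  have hrmem : r ∈ ellipticSubalgebra k (n+1) := by
    apply sq_mem
    intro j'
    rw [hr]
    simp only
    split
    · rw [mem_sq_iff]
      constructor
      · rw [PowerSeries.coeff_X_pow]
        simp only [if_neg (by omega : ¬ 0 = kk)]
      · rw [PowerSeries.coeff_X_pow]
        simp only [if_neg (by omega : ¬ 1 = kk)]
    · exact zero_mem _
  have := hg r hrmem
  rw [Finset.sum_eq_single j] at this
  · rw [hr] at this
    simp only [eq_self_iff_true, if_true] at this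
    rw [HahnSeries.ofPowerSeries_X_pow, single_mul_coeff'] at this
    rw [one_mul] at this
    convert this using 2
    omega
  · intro b _ hb
    rw [hr]
    simp only [if_neg hb, map_zero, zero_mul, HahnSeries.coeff_zero]
  · intro h
    exact absurd (Finset.mem_univ j) h

lemma E2 (g : Fin (n+1) → LaurentSeries k) (hg : g ∈ dualizingSet' k (n+1)) :
    ∑ j : Fin (n+1), (g j).coeff (-1) = 0 := by
  have := hg 1 (one_mem _)
  simpa using this

lemma E3 (g : Fin (n+1) → LaurentSeries k) (hg : g ∈ dualizingSet' k (n+1)) (i : Fin n) :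
    (g (Fin.castSucc i)).coeff (-2) + (g (Fin.last n)).coeff (-2) = 0 := by
  have := hg (xgen k n i) (xgen_mem k n i)
  have e : ∀ j : Fin (n+1),
      ((HahnSeries.ofPowerSeries ℤ k (xgen k n i j)) * g j).coeff (-1)
        = (if (j : ℕ) = (i : ℕ) ∨ (j : ℕ) = n then (g j).coeff (-2) else 0) := by
    intro j
    simp only [xgen]
    split
    · rw [HahnSeries.ofPowerSeries_X, single_mul_coeff', one_mul]
      norm_num
    · simp
  rw [Finset.sum_congr rfl (fun j _ => e j), sum_if_two] at this
  exact this

noncomputable def rcon (g : Fin (n+1) → LaurentSeries k) : Fin (n+1) → PowerSeries k :=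
  fun j => PowerSeries.mk (fun t => sgn k n j * (g j).coeff ((t : ℤ) - 2))

lemma rcon_eq (g : Fin (n+1) → LaurentSeries k) (hg : g ∈ dualizingSet' k (n+1)) :
    g = fun i => (HahnSeries.ofPowerSeries ℤ k (rcon k n g i)) * gen0 k n i := by
  funext i
  ext m
  rw [gen0, mul_single_coeff']
  by_cases hm : -2 ≤ m
  · rw [ofPS_coeff_nonneg k _ _ (by omega)]
    rw [rcon, PowerSeries.coeff_mk]
    have : ((((m - -2).toNat : ℕ)) : ℤ) - 2 = m := by omega
    rw [this]
    rw [mul_comm (sgn k n i), mul_assoc, sgn_sq, mul_one]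
  · rw [ofPS_coeff_neg k _ _ (by omega), zero_mul]
    exact E1 k n g hg i m (by omega)

lemma rcon_mem (g : Fin (n+1) → LaurentSeries k) (hg : g ∈ dualizingSet' k (n+1)) :
    rcon k n g ∈ ellipticSubalgebra k (n+1) := by
  apply S_le_R
  constructor
  · intro j
    simp only [rcon, PowerSeries.coeff_mk]
    norm_num
    by_cases hj : j = Fin.last n
    · rw [hj]
    · obtain ⟨j', rfl⟩ : ∃ j' : Fin n, j = Fin.castSucc j' := by
        have hlt : (j : ℕ) < n := by
          have := j.isLt
          have : (j : ℕ) ≠ n := fun h => hj (Fin.ext (by simp [h]))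
          omega
        exact ⟨⟨j, hlt⟩, by ext; rfl⟩
      rw [sgn_castSucc, sgn_last, one_mul]
      have := E3 k n g hg j'
      linear_combination this
  · have : ∀ j : Fin (n+1), sgn k n j * PowerSeries.coeff (R := k) 1 (rcon k n g j)
        = (g j).coeff (-1) := by
      intro j
      simp only [rcon, PowerSeries.coeff_mk]
      norm_num
      rw [← mul_assoc, sgn_sq, one_mul]
    rw [Finset.sum_congr rfl (fun j _ => this j)]
    exact E2 k n g hg

lemma cancel_gen0 (i : Fin (n+1)) (p q : PowerSeries k)
    (h : (HahnSeries.ofPowerSeries ℤ k p) * gen0 k n i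
       = (HahnSeries.ofPowerSeries ℤ k q) * gen0 k n i) : p = q := by
  apply HahnSeries.ofPowerSeries_injective (Γ := ℤ)
  have hne : gen0 k n i ≠ 0 := HahnSeries.single_ne_zero (sgn_ne_zero k n i)
  exact mul_right_cancel₀ hne h

end Aux12

/-- If `p ∈ C` is an elliptic `m`-fold point, then the dualizing sheaf `ω_C`
is invertible near `p` (the elliptic `m`-fold point is Gorenstein) — here: the
local dualizing module is free of rank one over the local ring `R`, generated
by a differential `g₀` — and `π^*ω_C = ω_{C̃}(2p₁ + ⋯ + 2p_m)`: the generator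
`g₀` has a pole of order exactly `2` on every branch. -/
theorem stmt12 (k : Type) [Field k] [IsAlgClosed k] (m : ℕ) (hm : 1 ≤ m) :
    ∃ g₀ ∈ dualizingSet k m,
      (∀ i : Fin m, (g₀ i).order = -2) ∧
      (∀ g ∈ dualizingSet k m,
        ∃! r : ellipticSubalgebra k m,
          g = fun i : Fin m =>
            (HahnSeries.ofPowerSeries ℤ k
              ((r : Fin m → PowerSeries k) i)) * g₀ i) := by
  obtain ⟨n, rfl⟩ : ∃ n, m = n + 1 := ⟨m - 1, by omega⟩
  have hDD : dualizingSet k (n+1) = Aux12.dualizingSet' k (n+1) := rfl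
  refine ⟨Aux12.gen0 k n, ?_, fun i => Aux12.gen0_order k n i, ?_⟩
  · rw [hDD]; exact Aux12.gen0_mem k n
  · intro g hg
    rw [hDD] at hg
    refine ⟨⟨Aux12.rcon k n g, Aux12.rcon_mem k n g hg⟩, Aux12.rcon_eq k n g hg, ?_⟩
    rintro ⟨r', hr'⟩ h
    have hre := Aux12.rcon_eq k n g hg
    apply Subtype.ext
    funext i
    apply Aux12.cancel_gen0 k n i
    rw [← congrFun h i, ← congrFun hre i]
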